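/- arXiv:2604.17791 — 2 statements merged into one kernel-verified Lean document; each statement's English description precedes it below -/
import Mathlib

section
/- Let θ = arccos(H/d) and θ̂ = arccos(H/d̂), where d = √(‖b − q‖² + H²), d̂ = √(‖b − q̂‖² + H²) and ‖q − q̂‖ ≤ r. Then |cos θ − cos θ̂| ≤ H·r/(d·d̂). -/
theorem aoa_cosine_error_bound (b q qhat : EuclideanSpace ℝ (Fin 2)) (H r : ℝ)
    (hH : 0 < H) (hq : ‖q - qhat‖ ≤ r) :
    |Real.cos (Real.arccos (H / Real.sqrt (‖b - q‖^2 + H^2))) -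
      Real.cos (Real.arccos (H / Real.sqrt (‖b - qhat‖^2 + H^2)))| ≤
      H * r /
        (Real.sqrt (‖b - q‖^2 + H^2) * Real.sqrt (‖b - qhat‖^2 + H^2)) := by
  set a := ‖b - q‖ with ha
  set c := ‖b - qhat‖ with hc
  have ha0 : 0 ≤ a := norm_nonneg _
  have hc0 : 0 ≤ c := norm_nonneg _
  set d := Real.sqrt (a^2 + H^2) with hd
  set e := Real.sqrt (c^2 + H^2) with he
  have hd2 : d^2 = a^2 + H^2 := Real.sq_sqrt (by positivity)
  have he2 : e^2 = c^2 + H^2 := Real.sq_sqrt (by positivity)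
  have hHd : H ≤ d := by
    rw [hd]
    nlinarith [Real.sqrt_le_sqrt (show H^2 ≤ a^2 + H^2 by nlinarith),
      Real.sqrt_sq hH.le]
  have hHe : H ≤ e := by
    rw [he]
    nlinarith [Real.sqrt_le_sqrt (show H^2 ≤ c^2 + H^2 by nlinarith),
      Real.sqrt_sq hH.le]
  have hd0 : 0 < d := lt_of_lt_of_le hH hHd
  have he0 : 0 < e := lt_of_lt_of_le hH hHe
  have hnd : (-1:ℝ) ≤ H / d := le_trans (by norm_num : (-1:ℝ) ≤ 0) (by positivity)
  have hne : (-1:ℝ) ≤ H / e := le_trans (by norm_num : (-1:ℝ) ≤ 0) (by positivity)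
  rw [Real.cos_arccos hnd ((div_le_one hd0).mpr hHd),
    Real.cos_arccos hne ((div_le_one he0).mpr hHe)]
  -- |c - a| ≤ r
  have hca : |c - a| ≤ r := by
    have h1 : |c - a| ≤ ‖(b - qhat) - (b - q)‖ := abs_norm_sub_norm_le _ _
    have h2 : (b - qhat) - (b - q) = q - qhat := by abel
    rw [h2] at h1
    linarith
  -- |e - d| ≤ |c - a|
  have hed : |e - d| ≤ |c - a| := by
    have hsq : (e - d)^2 ≤ (c - a)^2 := by
      have hde : a * c + H^2 ≤ d * e := by
        have hde0 : 0 ≤ d * e := by positivity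
        nlinarith [sq_nonneg (a*c - H^2), sq_nonneg (a - c),
          sq_nonneg (d*e - (a*c + H^2)), sq_nonneg (d*e + (a*c + H^2))]
      nlinarith
    have := Real.sqrt_le_sqrt hsq
    rwa [Real.sqrt_sq_eq_abs, Real.sqrt_sq_eq_abs] at this
  have hr0 : 0 ≤ r := le_trans (abs_nonneg _) hca
  have key : H / d - H / e = H * (e - d) / (d * e) := by
    field_simp
  rw [key, abs_div, abs_mul, abs_of_pos hH, abs_of_pos (mul_pos hd0 he0)]
  gcongr
  exact hed.trans hca
end

section
/- Under the assumptions ‖q − q̂‖ ≤ r, d = √(‖b − q‖² + H²), d̂ = √(‖b − q̂‖² + H²), antenna positions in [0, L], wavelength λ > 0, and channels h = (√g₀/d)·a(θ), ĥ = (√g₀/d̂)·a(θ̂) with cos θ = H/d, cos θ̂ = H/d̂, the channel estimation error satisfies ‖h − ĥ‖ ≤ (√(M·g₀)·r/(d·d̂))·(1 + 2πLH/(λ·d̂)). -/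
lemma norm_exp_I_mul_sub (s t : ℝ) :
    ‖Complex.exp (Complex.I * s) - Complex.exp (Complex.I * t)‖ ≤ |s - t| := by
  have h1 : Complex.exp (Complex.I * s) - Complex.exp (Complex.I * t)
      = Complex.exp (Complex.I * t) * (Complex.exp (Complex.I * (s - t : ℝ)) - 1) := by
    rw [mul_sub, mul_one, ← Complex.exp_add]
    push_cast
    ring_nf
  rw [h1, norm_mul]
  have ht : ‖Complex.exp (Complex.I * t)‖ = 1 := by
    rw [mul_comm]
    exact Complex.norm_exp_ofReal_mul_I t
  rw [ht, one_mul]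
  set u : ℝ := s - t with hu
  have hz : Complex.exp (Complex.I * u) - 1
      = ((Real.cos u - 1 : ℝ) : ℂ) + ((Real.sin u : ℝ) : ℂ) * Complex.I := by
    rw [mul_comm, Complex.exp_mul_I, ← Complex.ofReal_cos, ← Complex.ofReal_sin]
    push_cast
    ring
  rw [hz, Complex.norm_add_mul_I]
  have hident : (Real.cos u - 1)^2 + (Real.sin u)^2 = 4 * ((1 - Real.cos u)/2) := by
    have := Real.sin_sq_add_cos_sq u
    nlinarith
  rw [hident, show (4 : ℝ) * ((1 - Real.cos u)/2) = 2^2 * ((1 - Real.cos u)/2) by norm_num,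
    Real.sqrt_mul (by norm_num), Real.sqrt_sq (by norm_num), ← Real.abs_sin_half]
  calc 2 * |Real.sin (u / 2)| ≤ 2 * |u / 2| :=
        mul_le_mul_of_nonneg_left Real.abs_sin_le_abs (by norm_num)
    _ = |u| := by rw [abs_div]; norm_num; ring

lemma euclid_norm_le {M : ℕ} (v : EuclideanSpace ℂ (Fin M)) (c : ℝ) (hc : 0 ≤ c)
    (h : ∀ m, ‖v m‖ ≤ c) : ‖v‖ ≤ Real.sqrt M * c := by
  rw [EuclideanSpace.norm_eq]
  calc Real.sqrt (∑ i, ‖v i‖ ^ 2) ≤ Real.sqrt (∑ _i : Fin M, c ^ 2) := by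
        apply Real.sqrt_le_sqrt
        apply Finset.sum_le_sum
        intro i _
        have := h i
        nlinarith [norm_nonneg (v i)]
    _ = Real.sqrt M * c := by
        rw [Finset.sum_const, Finset.card_univ, Fintype.card_fin, nsmul_eq_mul,
          Real.sqrt_mul (Nat.cast_nonneg M), Real.sqrt_sq hc]

lemma sqrt_lip (a b c : ℝ) (ha : 0 ≤ a) (hb : 0 ≤ b) :
    |Real.sqrt (a^2 + c^2) - Real.sqrt (b^2 + c^2)| ≤ |a - b| := by
  have key : ∀ x y : ℝ, 0 ≤ x → x ≤ y →
      Real.sqrt (y^2 + c^2) ≤ Real.sqrt (x^2 + c^2) + (y - x) := by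
    intro x y hx hxy
    have hx' : x ≤ Real.sqrt (x^2 + c^2) := by
      rw [show x = Real.sqrt (x^2) by rw [Real.sqrt_sq hx]]
      exact Real.sqrt_le_sqrt (by nlinarith [Real.sq_sqrt (show (0:ℝ) ≤ x^2 by positivity)])
    have hs : (0:ℝ) ≤ Real.sqrt (x^2 + c^2) := Real.sqrt_nonneg _
    have hsq := Real.sq_sqrt (show (0:ℝ) ≤ x^2 + c^2 by positivity)
    calc Real.sqrt (y^2 + c^2) ≤ Real.sqrt ((Real.sqrt (x^2+c^2) + (y - x))^2) := by
          apply Real.sqrt_le_sqrt; nlinarith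
      _ = Real.sqrt (x^2+c^2) + (y - x) := Real.sqrt_sq (by nlinarith)
  rcases le_total a b with hab | hab
  · have := key a b ha hab
    rw [abs_sub_comm, abs_of_nonneg (by linarith [Real.sqrt_le_sqrt (show a^2+c^2 ≤ b^2+c^2 by nlinarith)] : (0:ℝ) ≤ Real.sqrt (b^2+c^2) - Real.sqrt (a^2+c^2)), abs_sub_comm a b, abs_of_nonneg (by linarith)]
    linarith
  · have := key b a hb hab
    rw [abs_of_nonneg (by linarith [Real.sqrt_le_sqrt (show b^2+c^2 ≤ a^2+c^2 by nlinarith)] : (0:ℝ) ≤ Real.sqrt (a^2+c^2) - Real.sqrt (b^2+c^2)), abs_of_nonneg (by linarith)]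
    linarith

theorem channel_estimation_error_bound (M : ℕ)
    (b q qhat : EuclideanSpace ℝ (Fin 2)) (H r g₀ L lam : ℝ)
    (hH : 0 < H) (hg₀ : 0 < g₀) (hlam : 0 < lam)
    (hq : ‖q - qhat‖ ≤ r)
    (x : Fin M → ℝ) (hx : ∀ m, x m ∈ Set.Icc 0 L)
    (d dhat : ℝ)
    (hd : d = Real.sqrt (‖b - q‖^2 + H^2))
    (hdhat : dhat = Real.sqrt (‖b - qhat‖^2 + H^2))
    (θ θhat : ℝ) (hθ : Real.cos θ = H / d) (hθhat : Real.cos θhat = H / dhat)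
    (h hhat : EuclideanSpace ℂ (Fin M))
    (hh : h = ((Real.sqrt g₀ / d : ℝ) : ℂ) •
      (WithLp.toLp 2 (fun m => Complex.exp (Complex.I * (2 * Real.pi / lam) * (x m) * Real.cos θ))
        : EuclideanSpace ℂ (Fin M)))
    (hhhat : hhat = ((Real.sqrt g₀ / dhat : ℝ) : ℂ) •
      (WithLp.toLp 2 (fun m => Complex.exp (Complex.I * (2 * Real.pi / lam) * (x m) * Real.cos θhat))
        : EuclideanSpace ℂ (Fin M))) :
    ‖h - hhat‖ ≤ (Real.sqrt (M * g₀) * r / (d * dhat)) *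
      (1 + 2 * Real.pi * L * H / (lam * dhat)) := by
  rcases Nat.eq_zero_or_pos M with hM | hM
  · -- M = 0 : both sides trivial
    subst hM
    have h0 : h - hhat = 0 := Subsingleton.elim _ _
    rw [h0, norm_zero]
    norm_num
  have hL : 0 ≤ L := le_trans (hx ⟨0, hM⟩).1 (hx ⟨0, hM⟩).2
  have hr0 : 0 ≤ r := le_trans (norm_nonneg _) hq
  have hdpos : 0 < d := by
    rw [hd]; exact Real.sqrt_pos.2 (by positivity)
  have hdhatpos : 0 < dhat := by
    rw [hdhat]; exact Real.sqrt_pos.2 (by positivity)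
  have hCpos : 0 < d * dhat := mul_pos hdpos hdhatpos
  -- distance bound
  have hdd : |d - dhat| ≤ r := by
    rw [hd, hdhat]
    refine le_trans (sqrt_lip _ _ H (norm_nonneg _) (norm_nonneg _)) ?_
    refine le_trans (abs_norm_sub_norm_le (b - q) (b - qhat)) ?_
    rw [show (b - q) - (b - qhat) = -(q - qhat) by abel, norm_neg]
    exact hq
  have habs : |dhat - d| ≤ r := by rw [abs_sub_comm]; exact hdd
  -- cosine bound
  have hcos : |Real.cos θ - Real.cos θhat| ≤ H * r / (d * dhat) := by
    rw [hθ, hθhat, show H / d - H / dhat = H * (dhat - d) / (d * dhat) by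
      field_simp]
    rw [abs_div, abs_mul, abs_of_pos hH, abs_of_pos hCpos]
    gcongr
  -- vectors
  set a : EuclideanSpace ℂ (Fin M) :=
    WithLp.toLp 2 (fun m => Complex.exp (Complex.I * (2 * Real.pi / lam) * (x m) * Real.cos θ)) with ha
  set ahat : EuclideanSpace ℂ (Fin M) :=
    WithLp.toLp 2 (fun m => Complex.exp (Complex.I * (2 * Real.pi / lam) * (x m) * Real.cos θhat)) with hahat
  have harg : ∀ (c : ℝ) (m : Fin M),
      Complex.I * (2 * Real.pi / lam) * (x m) * (c : ℂ)
        = Complex.I * ((2 * Real.pi / lam * x m * c : ℝ) : ℂ) := by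
    intro c m; push_cast; ring
  have hanorm : ∀ m, ‖a m‖ = 1 := by
    intro m
    rw [ha]
    show ‖Complex.exp (Complex.I * (2 * Real.pi / lam) * (x m) * Real.cos θ)‖ = 1
    rw [harg, mul_comm, Complex.norm_exp_ofReal_mul_I]
  -- entrywise bound on a - ahat
  have hdiff : ∀ m, ‖(a - ahat) m‖ ≤ 2 * Real.pi / lam * L * (H * r / (d * dhat)) := by
    intro m
    have hxm := hx m
    have hsub : (a - ahat) m = a m - ahat m := rfl
    rw [hsub, ha, hahat]
    show ‖Complex.exp (Complex.I * (2 * Real.pi / lam) * (x m) * Real.cos θ)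
        - Complex.exp (Complex.I * (2 * Real.pi / lam) * (x m) * Real.cos θhat)‖ ≤ _
    rw [harg, harg]
    refine le_trans (norm_exp_I_mul_sub _ _) ?_
    rw [show 2 * Real.pi / lam * x m * Real.cos θ - 2 * Real.pi / lam * x m * Real.cos θhat
        = (2 * Real.pi / lam * x m) * (Real.cos θ - Real.cos θhat) by ring, abs_mul]
    have h1 : |2 * Real.pi / lam * x m| ≤ 2 * Real.pi / lam * L := by
      rw [abs_of_nonneg (mul_nonneg (by positivity) hxm.1)]
      have hpl : 0 < 2 * Real.pi / lam := by positivity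
      nlinarith [hxm.2]
    exact mul_le_mul h1 hcos (abs_nonneg _) (by positivity)
  -- decompose
  have ecast : ((Real.sqrt g₀ / d - Real.sqrt g₀ / dhat : ℝ) : ℂ)
      = ((Real.sqrt g₀ / d : ℝ) : ℂ) - ((Real.sqrt g₀ / dhat : ℝ) : ℂ) := by
    push_cast; ring
  have hdecomp : h - hhat = ((Real.sqrt g₀ / d - Real.sqrt g₀ / dhat : ℝ) : ℂ) • a
      + ((Real.sqrt g₀ / dhat : ℝ) : ℂ) • (a - ahat) := by
    rw [hh, hhhat, ecast, sub_smul, smul_sub]; abel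
  have hna : ‖a‖ ≤ Real.sqrt M * 1 :=
    euclid_norm_le a 1 zero_le_one (fun m => le_of_eq (hanorm m))
  have hnd : ‖a - ahat‖ ≤ Real.sqrt M * (2 * Real.pi / lam * L * (H * r / (d * dhat))) :=
    euclid_norm_le _ _ (by positivity) hdiff
  have hc12 : ‖((Real.sqrt g₀ / d - Real.sqrt g₀ / dhat : ℝ) : ℂ)‖
      ≤ Real.sqrt g₀ * r / (d * dhat) := by
    rw [Complex.norm_real, Real.norm_eq_abs]
    rw [show Real.sqrt g₀ / d - Real.sqrt g₀ / dhat = Real.sqrt g₀ * (dhat - d) / (d * dhat) by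
      field_simp]
    rw [abs_div, abs_mul, abs_of_nonneg (Real.sqrt_nonneg _), abs_of_pos hCpos]
    gcongr
  have hc2 : ‖((Real.sqrt g₀ / dhat : ℝ) : ℂ)‖ = Real.sqrt g₀ / dhat := by
    rw [Complex.norm_real, Real.norm_eq_abs, abs_of_nonneg (by positivity)]
  calc ‖h - hhat‖
      ≤ ‖((Real.sqrt g₀ / d - Real.sqrt g₀ / dhat : ℝ) : ℂ) • a‖
        + ‖((Real.sqrt g₀ / dhat : ℝ) : ℂ) • (a - ahat)‖ := by
        rw [hdecomp]; exact norm_add_le _ _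
    _ = ‖((Real.sqrt g₀ / d - Real.sqrt g₀ / dhat : ℝ) : ℂ)‖ * ‖a‖
        + ‖((Real.sqrt g₀ / dhat : ℝ) : ℂ)‖ * ‖a - ahat‖ := by
        rw [norm_smul, norm_smul]
    _ ≤ (Real.sqrt g₀ * r / (d * dhat)) * (Real.sqrt M * 1)
        + (Real.sqrt g₀ / dhat) * (Real.sqrt M * (2 * Real.pi / lam * L * (H * r / (d * dhat)))) := by
        rw [hc2]
        refine add_le_add (mul_le_mul hc12 hna (norm_nonneg _) (by positivity))
          (mul_le_mul_of_nonneg_left hnd (by positivity))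
    _ = (Real.sqrt (M * g₀) * r / (d * dhat)) * (1 + 2 * Real.pi * L * H / (lam * dhat)) := by
        rw [Real.sqrt_mul (Nat.cast_nonneg M)]
        field_simp
end
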